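/- Under the same hypotheses (A = B + C, orthogonal Qᴸ = [Q₁ᴸ, Q₂ᴸ], Qᵁ = [Q₁ᵁ, Q₂ᵁ], (Q₂ᴸ)ᵀA = (Q₂ᴸ)ᵀC, AQ₂ᵁ = CQ₂ᵁ), the spectral norm error satisfies ‖A − Q₁ᴸ(Q₁ᴸ)ᵀ A Q₁ᵁ(Q₁ᵁ)ᵀ‖₂ ≤ 2‖C‖₂. -/

import Mathlib

open Matrix
noncomputable def specNorm {m n : Type*} [Fintype m] [Fintype n] [DecidableEq n]
    (A : Matrix m n ℝ) : ℝ :=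
  ‖LinearMap.toContinuousLinearMap (Matrix.toEuclideanLin A)‖

noncomputable def frobNorm {m n : Type*} [Fintype m] [Fintype n]
    (A : Matrix m n ℝ) : ℝ :=
  Real.sqrt (∑ i, ∑ j, (A i j) ^ 2)

/-- The `j`-th largest singular value of `A` (1-indexed), characterized as the
distance in spectral norm from `A` to the set of matrices of rank `< j`. -/
noncomputable def sval {m n : Type*} [Fintype m] [Fintype n] [DecidableEq n]
    (A : Matrix m n ℝ) (j : ℕ) : ℝ :=
  sInf { c | ∃ B : Matrix m n ℝ, B.rank < j ∧ specNorm (A - B) = c }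

section Aux

open scoped Matrix.Norms.L2Operator

lemma specNorm_eq_l2 {a b : ℕ} (A : Matrix (Fin a) (Fin b) ℝ) : specNorm A = ‖A‖ :=
  (Matrix.l2_opNorm_def A).symm

lemma l2_norm_one_le {a : ℕ} : ‖(1 : Matrix (Fin a) (Fin a) ℝ)‖ ≤ 1 := by
  rw [Matrix.l2_opNorm_def]
  have h1 : Matrix.toEuclideanLin (1 : Matrix (Fin a) (Fin a) ℝ) = LinearMap.id := by
    simp [Matrix.toEuclideanLin_eq_toLin]
  simp only [LinearEquiv.trans_apply, h1]
  exact le_trans (le_of_eq (congrArg norm rfl)) ContinuousLinearMap.norm_id_le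

lemma l2_norm_transpose {a b : ℕ} (Q : Matrix (Fin a) (Fin b) ℝ) : ‖Qᵀ‖ = ‖Q‖ := by
  rw [← Matrix.conjTranspose_eq_transpose_of_trivial, Matrix.l2_opNorm_conjTranspose]

lemma l2_norm_le_one {a b : ℕ} (Q : Matrix (Fin a) (Fin b) ℝ) (h : Qᵀ * Q = 1) :
    ‖Q‖ ≤ 1 := by
  have hsq : ‖Q‖ * ‖Q‖ ≤ 1 := by
    rw [← Matrix.l2_opNorm_conjTranspose_mul_self, Matrix.conjTranspose_eq_transpose_of_trivial, h]
    exact l2_norm_one_le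
  nlinarith [norm_nonneg ((Q : Matrix (Fin a) (Fin b) ℝ))]

lemma l2_norm_tr_le_one {a b : ℕ} (Q : Matrix (Fin a) (Fin b) ℝ) (h : Qᵀ * Q = 1) :
    ‖Qᵀ‖ ≤ 1 := by rw [l2_norm_transpose]; exact l2_norm_le_one Q h

lemma l2_mul_le_left {a b c : ℕ} (Q : Matrix (Fin a) (Fin b) ℝ) (M : Matrix (Fin b) (Fin c) ℝ)
    (hQ : ‖Q‖ ≤ 1) : ‖Q * M‖ ≤ ‖M‖ := by
  calc ‖Q * M‖ ≤ ‖Q‖ * ‖M‖ := Matrix.l2_opNorm_mul Q M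
    _ ≤ 1 * ‖M‖ := mul_le_mul_of_nonneg_right hQ (norm_nonneg _)
    _ = ‖M‖ := one_mul _

lemma l2_mul_le_right {a b c : ℕ} (M : Matrix (Fin a) (Fin b) ℝ) (Q : Matrix (Fin b) (Fin c) ℝ)
    (hQ : ‖Q‖ ≤ 1) : ‖M * Q‖ ≤ ‖M‖ := by
  calc ‖M * Q‖ ≤ ‖M‖ * ‖Q‖ := Matrix.l2_opNorm_mul M Q
    _ ≤ ‖M‖ * 1 := mul_le_mul_of_nonneg_left hQ (norm_nonneg _)
    _ = ‖M‖ := mul_one _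

end Aux

/-- spectral-norm CUR error bound:
‖A − Q₁ᴸ(Q₁ᴸ)ᵀ A Q₁ᵁ(Q₁ᵁ)ᵀ‖₂ ≤ 2‖C‖₂. -/
theorem cur_spectral_error_bound {m n k m' n' : ℕ}
    (A B C : Matrix (Fin m) (Fin n) ℝ) (hABC : A = B + C)
    (Q1L : Matrix (Fin m) (Fin k) ℝ) (Q2L : Matrix (Fin m) (Fin m') ℝ)
    (Q1U : Matrix (Fin n) (Fin k) ℝ) (Q2U : Matrix (Fin n) (Fin n') ℝ)
    (hL1 : fromCols Q1L Q2L * (fromCols Q1L Q2L)ᵀ = 1)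
    (hL2 : (fromCols Q1L Q2L)ᵀ * fromCols Q1L Q2L = 1)
    (hU1 : fromCols Q1U Q2U * (fromCols Q1U Q2U)ᵀ = 1)
    (hU2 : (fromCols Q1U Q2U)ᵀ * fromCols Q1U Q2U = 1)
    (h2L : Q2Lᵀ * A = Q2Lᵀ * C)
    (h2U : A * Q2U = C * Q2U) :
    specNorm (A - Q1L * Q1Lᵀ * A * Q1U * Q1Uᵀ) ≤ 2 * specNorm C := by
  open scoped Matrix.Norms.L2Operator in
  -- sum of projections = 1
  rw [transpose_fromCols, fromCols_mul_fromRows] at hL1 hU1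
  -- diagonal blocks of the Gram identities
  rw [transpose_fromCols, fromRows_mul_fromCols, ← fromBlocks_one] at hL2 hU2
  rw [Matrix.fromBlocks_inj] at hL2 hU2
  obtain ⟨h1L, -, -, hq2L⟩ := hL2
  obtain ⟨h1U, -, -, hq2U⟩ := hU2
  -- key algebraic identity
  have key : A - Q1L * Q1Lᵀ * A * Q1U * Q1Uᵀ
      = Q2L * (Q2Lᵀ * C) + Q1L * (Q1Lᵀ * ((C * Q2U) * Q2Uᵀ)) := by
    have e1 : Q2L * (Q2Lᵀ * C) = Q2L * Q2Lᵀ * A := by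
      rw [← h2L, ← Matrix.mul_assoc]
    have e2 : Q1L * (Q1Lᵀ * ((C * Q2U) * Q2Uᵀ)) = Q1L * Q1Lᵀ * A * (Q2U * Q2Uᵀ) := by
      rw [← h2U]
      simp only [Matrix.mul_assoc]
    rw [e1, e2]
    have hPL : Q2L * Q2Lᵀ = 1 - Q1L * Q1Lᵀ := by rw [← hL1]; abel
    have hPU : Q2U * Q2Uᵀ = 1 - Q1U * Q1Uᵀ := by rw [← hU1]; abel
    rw [hPL, hPU]
    simp only [Matrix.sub_mul, Matrix.mul_sub, Matrix.one_mul, Matrix.mul_one, Matrix.mul_assoc]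
    abel
  rw [specNorm_eq_l2, specNorm_eq_l2, key]
  have b1 : ‖Q2L * (Q2Lᵀ * C)‖ ≤ ‖C‖ :=
    le_trans (l2_mul_le_left _ _ (l2_norm_le_one Q2L hq2L))
      (l2_mul_le_left _ _ (l2_norm_tr_le_one Q2L hq2L))
  have b2 : ‖Q1L * (Q1Lᵀ * ((C * Q2U) * Q2Uᵀ))‖ ≤ ‖C‖ := by
    refine le_trans (l2_mul_le_left _ _ (l2_norm_le_one Q1L h1L)) ?_
    refine le_trans (l2_mul_le_left _ _ (l2_norm_tr_le_one Q1L h1L)) ?_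
    refine le_trans (l2_mul_le_right _ _ (l2_norm_tr_le_one Q2U hq2U)) ?_
    exact l2_mul_le_right _ _ (l2_norm_le_one Q2U hq2U)
  calc ‖Q2L * (Q2Lᵀ * C) + Q1L * (Q1Lᵀ * ((C * Q2U) * Q2Uᵀ))‖
      ≤ ‖Q2L * (Q2Lᵀ * C)‖ + ‖Q1L * (Q1Lᵀ * ((C * Q2U) * Q2Uᵀ))‖ := norm_add_le _ _
    _ ≤ ‖C‖ + ‖C‖ := add_le_add b1 b2
    _ = 2 * ‖C‖ := by ring
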